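/- Let n ≥ 1 and let H be an (n+1)-partite (n+1)-uniform hypergraph with parts V_0, ..., V_n each of size C, such that H contains no complete (n+1)-partite subhypergraph K^{(n+1)}(3, ..., 3) (i.e., there are no 3-element subsets T_i ⊆ V_i, 0 ≤ i ≤ n, with every transversal {t_0, ..., t_n}, t_i ∈ T_i, an edge). Then for C sufficiently large, the number of edges of H is at most (2nC)^{n+1 - 3^{-n}}. -/

import Mathlib

open scoped Classical
open Finset


private lemma cube_le_six_choose (d : ℕ) : (d - 2)^3 ≤ 6 * d.choose 3 := by
  have h6 : 6 * d.choose 3 = d.descFactorial 3 := by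
    rw [Nat.descFactorial_eq_factorial_mul_choose]
    norm_num [Nat.factorial]
  have h3 : d.descFactorial 3 = (d - 2) * ((d - 1) * d) := by
    simp [Nat.descFactorial_succ, Nat.descFactorial]
  rw [h6, h3, show (d-2)^3 = (d-2)*((d-2)*(d-2)) by ring]
  exact Nat.mul_le_mul le_rfl (Nat.mul_le_mul (by omega) (by omega))

private lemma six_choose_le_cube (C : ℕ) : 6 * C.choose 3 ≤ C ^ 3 := by
  have h6 : 6 * C.choose 3 = C.descFactorial 3 := by
    rw [Nat.descFactorial_eq_factorial_mul_choose]
    norm_num [Nat.factorial]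
  rw [h6]; exact Nat.descFactorial_le_pow C 3

set_option maxHeartbeats 2000000 in
private lemma erdos_step (m : ℕ) (hm : 1 ≤ m) (C₁ : ℕ)
    (IH : ∀ C : ℕ, C₁ ≤ C → ∀ (α : Type) (V : Fin m → Finset α) (E : Finset (Fin m → α)),
      (∀ i, (V i).card = C) → (∀ e ∈ E, ∀ i, e i ∈ V i) →
      (¬ ∃ T : Fin m → Finset α, (∀ i, T i ⊆ V i ∧ (T i).card = 3) ∧
        ∀ t ∈ Fintype.piFinset T, t ∈ E) →
      (E.card : ℝ) ≤ 2 * (C:ℝ) ^ ((m:ℝ) - (3:ℝ) ^ (1 - (m:ℝ)))) :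
    ∀ C : ℕ, max C₁ 1000 ≤ C → ∀ (α : Type) (V : Fin (m+1) → Finset α)
      (E : Finset (Fin (m+1) → α)),
      (∀ i, (V i).card = C) → (∀ e ∈ E, ∀ i, e i ∈ V i) →
      (¬ ∃ T : Fin (m+1) → Finset α, (∀ i, T i ⊆ V i ∧ (T i).card = 3) ∧
        ∀ t ∈ Fintype.piFinset T, t ∈ E) →
      (E.card : ℝ) ≤ 2 * (C:ℝ) ^ ((↑(m+1):ℝ) - (3:ℝ) ^ (1 - (↑(m+1):ℝ))) := by
  intro C hC α V E hcard hparts hK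
  have hC1000 : 1000 ≤ C := le_trans (le_max_right _ _) hC
  have hCC1 : C₁ ≤ C := le_trans (le_max_left _ _) hC
  have hC0 : (0:ℝ) < C := by exact_mod_cast Nat.lt_of_lt_of_le (by norm_num) hC1000
  have hC1 : (1:ℝ) ≤ C := by exact_mod_cast Nat.le_trans (by norm_num) hC1000
  set x : ℝ := (m:ℝ) - (3:ℝ) ^ (1 - (m:ℝ)) with hxdef
  set X : ℝ := ((m:ℝ) + 1) - (3:ℝ) ^ (-(m:ℝ)) with hXdef
  have hexp : ((↑(m+1):ℝ) - (3:ℝ) ^ (1 - (↑(m+1):ℝ))) = X := by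
    have h1 : (1:ℝ) - (↑(m+1):ℝ) = -(m:ℝ) := by push_cast; ring
    rw [h1, hXdef]; push_cast; ring
  rw [hexp]
  -- basic exponent facts
  have h3m : (3:ℝ) ^ (1-(m:ℝ)) = 3 * (3:ℝ) ^ (-(m:ℝ)) := by
    rw [show (1:ℝ)-(m:ℝ) = 1 + -(m:ℝ) by ring, Real.rpow_add (by norm_num), Real.rpow_one]
  have h3X : 3 * X = 2*(m:ℝ) + 3 + x := by rw [hXdef, hxdef, h3m]; ring
  have h3small : (3:ℝ) ^ (-(m:ℝ)) ≤ 1/3 := by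
    have := Real.rpow_le_rpow_of_exponent_le (by norm_num : (1:ℝ) ≤ 3)
      (show -(m:ℝ) ≤ -1 by simp; exact_mod_cast hm)
    rw [show (-1:ℝ) = -(1:ℝ) by ring, Real.rpow_neg_one] at this
    linarith
  -- set up the parts
  set W : Fin m → Finset α := fun i => V i.succ with hWdef
  set T : Finset (Fin m → α) := Fintype.piFinset W with hTdef
  set fib : (Fin m → α) → Finset α := fun t => (V 0).filter (fun v => Fin.cons v t ∈ E)
    with hfibdef
  set d : (Fin m → α) → ℕ := fun t => (fib t).card with hddef
  have hTcard : (T.card : ℝ) = (C:ℝ) ^ (m:ℕ) := by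
    rw [hTdef, Fintype.card_piFinset]
    push_cast
    rw [Finset.prod_congr rfl (fun i _ => by rw [hWdef, hcard i.succ])]
    simp
  have hA : E.card = ∑ t ∈ T, d t := by
    have h1 : E.card = ∑ t ∈ T, (E.filter fun e => Fin.tail e = t).card := by
      apply Finset.card_eq_sum_card_fiberwise
      intro e he
      rw [hTdef, Finset.mem_coe, Fintype.mem_piFinset]
      intro i
      exact hparts e he i.succ
    rw [h1]
    refine Finset.sum_congr rfl fun t ht => ?_
    refine Finset.card_bij' (fun e _ => e 0) (fun v _ => Fin.cons v t) ?_ ?_ ?_ ?_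
    · intro e he
      simp only [Finset.mem_filter] at he
      simp only [hfibdef, Finset.mem_filter]
      refine ⟨hparts e he.1 0, ?_⟩
      rw [← he.2, Fin.cons_self_tail]
      exact he.1
    · intro v hv
      simp only [hfibdef, Finset.mem_filter] at hv
      simp only [Finset.mem_filter]
      exact ⟨hv.2, by simp⟩
    · intro e he
      simp only [Finset.mem_filter] at he
      have h := Fin.cons_self_tail e
      rw [he.2] at h
      exact h
    · intro v hv
      simp
  have hB : ∑ t ∈ T, (d t).choose 3
      = ∑ S ∈ (V 0).powersetCard 3, (T.filter fun t => S ⊆ fib t).card := by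
    have h1 : ∀ t, (d t).choose 3
        = (((V 0).powersetCard 3).filter fun S => S ⊆ fib t).card := by
      intro t
      rw [hddef, ← Finset.card_powersetCard]
      congr 1
      ext S
      simp only [Finset.mem_powersetCard, Finset.mem_filter]
      constructor
      · rintro ⟨h1, h2⟩
        exact ⟨⟨h1.trans (Finset.filter_subset _ _), h2⟩, h1⟩
      · rintro ⟨⟨_, h2⟩, h3⟩
        exact ⟨h3, h2⟩
    calc ∑ t ∈ T, (d t).choose 3
        = ∑ t ∈ T, ∑ S ∈ (V 0).powersetCard 3, if S ⊆ fib t then 1 else 0 := by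
          refine Finset.sum_congr rfl fun t _ => ?_
          rw [h1 t, Finset.card_filter]
      _ = ∑ S ∈ (V 0).powersetCard 3, ∑ t ∈ T, if S ⊆ fib t then 1 else 0 :=
          Finset.sum_comm
      _ = ∑ S ∈ (V 0).powersetCard 3, (T.filter fun t => S ⊆ fib t).card := by
          refine Finset.sum_congr rfl fun S _ => (Finset.card_filter _ _).symm
  have hCS : ∀ S ∈ (V 0).powersetCard 3,
      ((T.filter fun t => S ⊆ fib t).card : ℝ) ≤ 2 * (C:ℝ) ^ x := by
    intro S hS
    rw [Finset.mem_powersetCard] at hS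
    refine IH C hCC1 α W (T.filter fun t => S ⊆ fib t) ?_ ?_ ?_
    · intro i; rw [hWdef]; exact hcard i.succ
    · intro t ht i
      have h := (Finset.mem_filter.1 ht).1
      rw [hTdef, Fintype.mem_piFinset] at h
      exact h i
    · rintro ⟨T', hT', htrans⟩
      apply hK
      refine ⟨Fin.cons S T', ?_, ?_⟩
      · intro i
        refine Fin.cases ?_ ?_ i
        · simpa using ⟨hS.1, hS.2⟩
        · intro j; simpa using hT' j
      · intro u hu
        rw [Fintype.mem_piFinset] at hu
        have hu0 : u 0 ∈ S := by simpa using hu 0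
        have hut : Fin.tail u ∈ Fintype.piFinset T' := by
          rw [Fintype.mem_piFinset]
          intro i
          simpa [Fin.tail] using hu i.succ
        have h2 := htrans _ hut
        rw [Finset.mem_filter] at h2
        have h3 := h2.2 hu0
        simp only [hfibdef, Finset.mem_filter] at h3
        have h4 := h3.2
        rwa [Fin.cons_self_tail] at h4
  have hUB : (∑ t ∈ T, ((d t).choose 3 : ℝ)) ≤ (C:ℝ)^(3:ℕ)/6 * (2 * (C:ℝ)^x) := by
    calc (∑ t ∈ T, ((d t).choose 3 : ℝ))
        = ((∑ t ∈ T, (d t).choose 3 : ℕ) : ℝ) := by push_cast; ring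
      _ ≤ ((∑ S ∈ (V 0).powersetCard 3, (T.filter fun t => S ⊆ fib t).card : ℕ) : ℝ) := by
          exact_mod_cast le_of_eq hB
      _ = ∑ S ∈ (V 0).powersetCard 3, ((T.filter fun t => S ⊆ fib t).card : ℝ) := by
          push_cast; ring
      _ ≤ ∑ S ∈ (V 0).powersetCard 3, 2 * (C:ℝ)^x := Finset.sum_le_sum hCS
      _ = (((V 0).powersetCard 3).card : ℝ) * (2 * (C:ℝ)^x) := by
          rw [Finset.sum_const, nsmul_eq_mul]
      _ ≤ (C:ℝ)^(3:ℕ)/6 * (2 * (C:ℝ)^x) := by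
          apply mul_le_mul_of_nonneg_right _ (by positivity)
          rw [Finset.card_powersetCard, hcard 0]
          have := six_choose_le_cube C
          have h2 : ((6 * C.choose 3 : ℕ) : ℝ) ≤ ((C^3 : ℕ) : ℝ) := by exact_mod_cast this
          push_cast at h2 ⊢
          linarith
  -- now the two cases
  rcases le_or_gt (E.card : ℝ) (20 * (C:ℝ)^(m:ℕ)) with hcase | hcase
  · -- sparse case
    have h10 : (10:ℝ) ≤ (C:ℝ) ^ ((1:ℝ) - (3:ℝ)^(-(m:ℝ))) := by
      have h23 : ((C:ℝ)) ^ ((2:ℝ)/3) ≤ (C:ℝ) ^ ((1:ℝ) - (3:ℝ)^(-(m:ℝ))) :=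
        Real.rpow_le_rpow_of_exponent_le hC1 (by linarith [h3small])
      have hcube : ((C:ℝ) ^ ((2:ℝ)/3))^(3:ℕ) = (C:ℝ)^(2:ℕ) := by
        rw [← Real.rpow_natCast ((C:ℝ) ^ ((2:ℝ)/3)) 3, ← Real.rpow_mul hC0.le,
          ← Real.rpow_natCast (C:ℝ) 2]
        norm_num
      have h1000 : (1000:ℝ) ≤ C := by exact_mod_cast hC1000
      have h102 : (10:ℝ)^(3:ℕ) ≤ ((C:ℝ) ^ ((2:ℝ)/3))^(3:ℕ) := by
        rw [hcube]; nlinarith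
      have hnn : (0:ℝ) ≤ (C:ℝ)^((2:ℝ)/3) := Real.rpow_nonneg hC0.le _
      have := le_of_pow_le_pow_left₀ (by norm_num) hnn h102
      linarith
    calc (E.card : ℝ) ≤ 20 * (C:ℝ)^(m:ℕ) := hcase
      _ ≤ 2 * ((C:ℝ)^(m:ℕ) * (C:ℝ) ^ ((1:ℝ) - (3:ℝ)^(-(m:ℝ)))) := by
          nlinarith [pow_pos hC0 m, Real.rpow_nonneg (le_of_lt hC0) ((1:ℝ) - (3:ℝ)^(-(m:ℝ)))]
      _ = 2 * (C:ℝ) ^ X := by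
          rw [← Real.rpow_natCast (C:ℝ) m, ← Real.rpow_add hC0, hXdef]
          ring_nf
  · -- dense case
    set g : (Fin m → α) → ℝ := fun t => ((d t - 2 : ℕ) : ℝ) with hgdef
    have hgnn : ∀ t ∈ T, (0:ℝ) ≤ g t := fun t _ => Nat.cast_nonneg _
    have hge : ∀ t, (d t : ℝ) - 2 ≤ g t := by
      intro t
      rcases le_or_gt 2 (d t) with h | h
      · simp only [hgdef, Nat.cast_sub h]
        norm_num
      · have h1 : ((d t : ℕ):ℝ) ≤ 2 := by exact_mod_cast h.le
        have h2 : (0:ℝ) ≤ g t := Nat.cast_nonneg _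
        linarith
    have hsum_d : (∑ t ∈ T, (d t : ℝ)) = E.card := by
      rw [hA]; push_cast; ring
    have hsumg : (E.card : ℝ) - 2 * (C:ℝ)^(m:ℕ) ≤ ∑ t ∈ T, g t := by
      have : ∑ t ∈ T, ((d t:ℝ) - 2) ≤ ∑ t ∈ T, g t :=
        Finset.sum_le_sum fun t _ => hge t
      rw [Finset.sum_sub_distrib, hsum_d, Finset.sum_const, nsmul_eq_mul] at this
      rw [← hTcard]
      linarith
    have h9 : (9/10) * (E.card:ℝ) ≤ ∑ t ∈ T, g t := by
      have hEnn : (0:ℝ) ≤ E.card := Nat.cast_nonneg _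
      nlinarith [hcase, hsumg]
    have hTpos : (0:ℝ) < (T.card:ℝ) := by
      rw [hTcard]; positivity
    have hpow : (∑ t ∈ T, g t)^3 ≤ (T.card:ℝ)^2 * ∑ t ∈ T, (g t)^3 := by
      have h := pow_sum_div_card_le_sum_pow (s := T) (f := g) hgnn 2
      rw [div_le_iff₀ (pow_pos hTpos 2)] at h
      calc (∑ t ∈ T, g t)^3 = (∑ t ∈ T, g t)^(2+1) := by norm_num
        _ ≤ (∑ t ∈ T, (g t)^(2+1)) * (T.card:ℝ)^2 := h
        _ = (T.card:ℝ)^2 * ∑ t ∈ T, (g t)^3 := by rw [mul_comm]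
    have hg3 : ∑ t ∈ T, (g t)^3 ≤ 6 * ∑ t ∈ T, ((d t).choose 3 : ℝ) := by
      rw [Finset.mul_sum]
      refine Finset.sum_le_sum fun t _ => ?_
      rw [hgdef]
      have hc := cube_le_six_choose (d t)
      calc ((d t - 2 : ℕ):ℝ)^3 = (((d t - 2)^3 : ℕ) : ℝ) := by push_cast; ring
        _ ≤ ((6 * (d t).choose 3 : ℕ):ℝ) := by exact_mod_cast hc
        _ = 6 * ((d t).choose 3 : ℝ) := by push_cast; ring
    have hR : ((C:ℝ)^(m:ℕ))^2 * (6 * ((C:ℝ)^(3:ℕ)/6 * (2*(C:ℝ)^x)))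
        = 2 * ((C:ℝ)^X)^3 := by
      have e1 : ((C:ℝ)^(m:ℕ))^2 = (C:ℝ) ^ (2*(m:ℝ)) := by
        rw [← Real.rpow_natCast (C:ℝ) m, ← Real.rpow_natCast ((C:ℝ)^((m:ℕ):ℝ)) 2,
          ← Real.rpow_mul hC0.le]
        push_cast
        ring_nf
      have e2 : ((C:ℝ)^(3:ℕ)) = (C:ℝ) ^ ((3:ℝ)) := by
        rw [← Real.rpow_natCast (C:ℝ) 3]; norm_num
      have e3 : ((C:ℝ)^X)^3 = (C:ℝ) ^ (3*X) := by
        rw [← Real.rpow_natCast ((C:ℝ)^X) 3, ← Real.rpow_mul hC0.le]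
        ring_nf
      rw [e1, e2, e3, h3X, show 2*(m:ℝ)+3+x = 2*(m:ℝ) + ((3:ℝ) + x) by ring,
        Real.rpow_add hC0, Real.rpow_add hC0]
      ring
    have key3 : ((E.card:ℝ))^3 ≤ 8 * ((C:ℝ)^X)^3 := by
      have hN : (0:ℝ) ≤ E.card := Nat.cast_nonneg _
      have c1 : ((9/10)*(E.card:ℝ))^3 ≤ (∑ t ∈ T, g t)^3 :=
        pow_le_pow_left₀ (by positivity) h9 3
      have c2 : (T.card:ℝ)^2 * (∑ t ∈ T, (g t)^3)
          ≤ (T.card:ℝ)^2 * (6 * ∑ t ∈ T, ((d t).choose 3 : ℝ)) :=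
        mul_le_mul_of_nonneg_left hg3 (sq_nonneg _)
      have c3 : (T.card:ℝ)^2 * (6 * ∑ t ∈ T, ((d t).choose 3 : ℝ))
          ≤ 2 * ((C:ℝ)^X)^3 := by
        rw [hTcard, ← hR]
        refine mul_le_mul_of_nonneg_left ?_ (sq_nonneg _)
        linarith [hUB]
      have hXnn0 : (0:ℝ) ≤ (C:ℝ)^X := Real.rpow_nonneg hC0.le _
      have hYnn : (0:ℝ) ≤ ((C:ℝ)^X)^3 := pow_nonneg hXnn0 3
      have h := le_trans c1 (le_trans hpow (le_trans c2 c3))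
      have hexpand : ((9/10)*(E.card:ℝ))^3 = 729/1000 * (E.card:ℝ)^3 := by ring
      rw [hexpand] at h
      linarith
    have hXnn : (0:ℝ) ≤ (C:ℝ)^X := Real.rpow_nonneg hC0.le _
    have h2X : (0:ℝ) ≤ 2 * (C:ℝ)^X := by positivity
    refine le_of_pow_le_pow_left₀ (n := 3) (by norm_num) h2X ?_
    calc ((E.card:ℝ))^3 ≤ 8 * ((C:ℝ)^X)^3 := key3
      _ = (2 * (C:ℝ)^X)^3 := by ring


private lemma erdos_base (C : ℕ) (α : Type) (V : Fin 1 → Finset α)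
    (E : Finset (Fin 1 → α)) (hparts : ∀ e ∈ E, ∀ i, e i ∈ V i)
    (hK : ¬ ∃ T : Fin 1 → Finset α,
      (∀ i, T i ⊆ V i ∧ (T i).card = 3) ∧ ∀ t ∈ Fintype.piFinset T, t ∈ E) :
    E.card ≤ 2 := by
  by_contra hlt
  push_neg at hlt
  have hinj : Set.InjOn (fun e : Fin 1 → α => e 0) E := by
    intro a _ b _ hab
    funext i
    have : i = 0 := Subsingleton.elim i 0
    rw [this]; exact hab
  have himg : (E.image fun e => e 0).card = E.card := Finset.card_image_of_injOn hinj
  have h3le : 3 ≤ (E.image fun e => e 0).card := by rw [himg]; exact hlt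
  obtain ⟨S, hSsub, hScard⟩ := Finset.exists_subset_card_eq h3le
  apply hK
  refine ⟨fun _ => S, fun i => ⟨?_, hScard⟩, ?_⟩
  · intro x hx
    obtain ⟨e, he, rfl⟩ := Finset.mem_image.1 (hSsub hx)
    have : i = 0 := Subsingleton.elim i 0
    rw [this]; exact hparts e he 0
  · intro t ht
    rw [Fintype.mem_piFinset] at ht
    obtain ⟨e, he, he0⟩ := Finset.mem_image.1 (hSsub (ht 0))
    have : t = e := by
      funext i
      have : i = 0 := Subsingleton.elim i 0
      rw [this]; exact he0.symm
    rwa [this]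

private lemma erdos_key : ∀ m : ℕ, 1 ≤ m → ∃ C₀ : ℕ, 1000 ≤ C₀ ∧ ∀ C : ℕ, C₀ ≤ C →
    ∀ (α : Type) (V : Fin m → Finset α) (E : Finset (Fin m → α)),
      (∀ i, (V i).card = C) → (∀ e ∈ E, ∀ i, e i ∈ V i) →
      (¬ ∃ T : Fin m → Finset α, (∀ i, T i ⊆ V i ∧ (T i).card = 3) ∧
        ∀ t ∈ Fintype.piFinset T, t ∈ E) →
      (E.card : ℝ) ≤ 2 * (C:ℝ) ^ ((m:ℝ) - (3:ℝ) ^ (1 - (m:ℝ))) := by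
  refine Nat.le_induction ?_ ?_
  · refine ⟨1000, le_refl _, ?_⟩
    intro C hC α V E hcard hparts hK
    have h2 : E.card ≤ 2 := erdos_base C α V E hparts hK
    have hzero : ((1:ℕ):ℝ) - (3:ℝ) ^ (1 - ((1:ℕ):ℝ)) = 0 := by norm_num
    rw [hzero, Real.rpow_zero]
    have : (E.card : ℝ) ≤ 2 := by exact_mod_cast h2
    linarith
  · intro m hm ih
    obtain ⟨C₁, hC₁, IH⟩ := ih
    exact ⟨max C₁ 1000, le_max_right _ _, erdos_step m hm C₁ IH⟩


/-- **Erdős's hypergraph extremal bound** (Kővári–Sós–Turán type, used in the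
paper via Erdős's theorem). Let `n ≥ 1`. An `(n+1)`-partite `(n+1)`-uniform
hypergraph is modelled by parts `V 0, …, V n` (each of size `C`) of a vertex
type `α` together with an edge set `E ⊆ V 0 × ⋯ × V n`. If `H` contains no
complete `(n+1)`-partite subhypergraph `K^(n+1)(3, …, 3)` — i.e. there are no
`3`-element subsets `T i ⊆ V i` all of whose transversals are edges — then for
`C` sufficiently large the number of edges is at most `(2nC)^(n+1-3^(-n))`. -/
theorem hypergraph_extremal_bound {n : ℕ} (hn : 1 ≤ n) :
    ∃ C₀ : ℕ, ∀ C : ℕ, C₀ ≤ C →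
      ∀ (α : Type) (V : Fin (n + 1) → Finset α)
        (E : Finset (Fin (n + 1) → α)),
        (∀ i, (V i).card = C) →
        (∀ e ∈ E, ∀ i, e i ∈ V i) →
        (¬ ∃ T : Fin (n + 1) → Finset α,
          (∀ i, T i ⊆ V i ∧ (T i).card = 3) ∧
          ∀ t ∈ Fintype.piFinset T, t ∈ E) →
        (E.card : ℝ) ≤ ((2 * n * C : ℕ) : ℝ) ^ ((n : ℝ) + 1 - (3 : ℝ) ^ (-(n : ℝ))) := by
  obtain ⟨C₀, hC₀, hkey⟩ := erdos_key (n+1) (by omega)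
  refine ⟨C₀, fun C hCge α V E h1 h2 h3 => ?_⟩
  have hb := hkey C hCge α V E h1 h2 h3
  have hC1000 : 1000 ≤ C := le_trans hC₀ hCge
  have hC0 : (0:ℝ) < C := by exact_mod_cast Nat.lt_of_lt_of_le (by norm_num) hC1000
  set y : ℝ := (n:ℝ) + 1 - (3:ℝ)^(-(n:ℝ)) with hy
  have hexp : (((n+1:ℕ)):ℝ) - (3:ℝ)^(1 - (((n+1:ℕ)):ℝ)) = y := by
    have ha : (1:ℝ) - (((n+1:ℕ)):ℝ) = -(n:ℝ) := by push_cast; ring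
    rw [ha, hy]; push_cast; ring
  rw [hexp] at hb
  have hn1 : (1:ℝ) ≤ (n:ℝ) := by exact_mod_cast hn
  have h3small : (3:ℝ)^(-(n:ℝ)) ≤ 1/3 := by
    have h := Real.rpow_le_rpow_of_exponent_le (by norm_num : (1:ℝ) ≤ 3)
      (show -(n:ℝ) ≤ -1 by linarith)
    rw [show (-1:ℝ) = -(1:ℝ) by ring, Real.rpow_neg_one] at h
    linarith
  have hy1 : (1:ℝ) ≤ y := by rw [hy]; linarith
  have h2ny : (2:ℝ) ≤ (2*(n:ℝ))^y := by
    calc (2:ℝ) ≤ 2*(n:ℝ) := by linarith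
      _ = (2*(n:ℝ))^(1:ℝ) := (Real.rpow_one _).symm
      _ ≤ (2*(n:ℝ))^y := Real.rpow_le_rpow_of_exponent_le (by linarith) hy1
  have hcast : ((2*n*C : ℕ):ℝ) = 2*(n:ℝ)*(C:ℝ) := by push_cast; ring
  have hCy : (0:ℝ) ≤ (C:ℝ)^y := Real.rpow_nonneg hC0.le _
  calc (E.card:ℝ) ≤ 2 * (C:ℝ)^y := hb
    _ ≤ (2*(n:ℝ))^y * (C:ℝ)^y := mul_le_mul_of_nonneg_right h2ny hCy
    _ = ((2*(n:ℝ))*(C:ℝ))^y := (Real.mul_rpow (by positivity) hC0.le).symm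
    _ = ((2*n*C:ℕ):ℝ)^y := by rw [hcast]
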